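/- Let q, r ∈ (0,1) and for p ∈ [0,1] define L(p) = [p log(p/q) + (1−p) log((1−p)/(1−q))] + [p log(p/r) + (1−p) log((1−p)/(1−r))] (with the convention 0 log 0 = 0). Then L attains its minimum over [0,1] at p̂ = s/(1+s), where s = √( q r / ((1−q)(1−r)) ), and the minimum value is L(p̂) = −2 log( √((1−q)(1−r)) + √(q r) ). -/

import Mathlib

lemma aux_log (t u : ℝ) (ht : 0 ≤ t) (hu : 0 < u) : t * Real.log (u / t) ≤ u - t := by
  rcases ht.eq_or_lt with h | h
  · simp [← h]; linarith
  · have h1 := Real.log_le_sub_one_of_pos (show 0 < u / t by positivity)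
    have h2 : t * (u / t) = u := by field_simp
    nlinarith [h1]

lemma pair_log (p q r : ℝ) (hp : 0 ≤ p) (hq : 0 < q) (hr : 0 < r) :
    p * Real.log (p / q) + p * Real.log (p / r)
      = 2 * (p * Real.log (p / Real.sqrt (q * r))) := by
  rcases hp.eq_or_lt with h | h
  · simp [← h]
  · have hqr : 0 < q * r := mul_pos hq hr
    rw [Real.log_div h.ne' hq.ne', Real.log_div h.ne' hr.ne',
      Real.log_div h.ne' (Real.sqrt_pos.2 hqr).ne', Real.log_sqrt hqr.le,
      Real.log_mul hq.ne' hr.ne']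
    ring

lemma gibbs_term (p a c : ℝ) (hp : 0 ≤ p) (ha : 0 < a) (hc : 0 < c) :
    p * Real.log c + p - a * c ≤ p * Real.log (p / a) := by
  rcases hp.eq_or_lt with h | h
  · simp [← h]; positivity
  · have h1 := aux_log p (a * c) hp (by positivity)
    have e : Real.log ((a * c) / p) = Real.log c - Real.log (p / a) := by
      rw [Real.log_div (by positivity) h.ne', Real.log_mul ha.ne' hc.ne',
        Real.log_div h.ne' ha.ne']
      ring
    rw [e, mul_sub] at h1
    linarith

lemma gibbs (p a b : ℝ) (hp0 : 0 ≤ p) (hp1 : p ≤ 1) (ha : 0 < a) (hb : 0 < b) :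
    -Real.log (a + b) ≤ p * Real.log (p / a) + (1 - p) * Real.log ((1 - p) / b) := by
  have hab : 0 < a + b := by linarith
  have hc : 0 < (a + b)⁻¹ := by positivity
  have e1 := gibbs_term p a (a + b)⁻¹ hp0 ha hc
  have e2 := gibbs_term (1 - p) b (a + b)⁻¹ (by linarith) hb hc
  have h3 : (a + b) * (a + b)⁻¹ = 1 := mul_inv_cancel₀ hab.ne'
  have h4 : Real.log (a + b)⁻¹ = -Real.log (a + b) := Real.log_inv _
  nlinarith [e1, e2]

theorem stmt_9 (q r : ℝ) (hq : q ∈ Set.Ioo (0 : ℝ) 1) (hr : r ∈ Set.Ioo (0 : ℝ) 1)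
    (L : ℝ → ℝ)
    (hL : ∀ p, L p = (p * Real.log (p / q) + (1 - p) * Real.log ((1 - p) / (1 - q)))
      + (p * Real.log (p / r) + (1 - p) * Real.log ((1 - p) / (1 - r))))
    (s : ℝ) (hs : s = Real.sqrt (q * r / ((1 - q) * (1 - r))))
    (phat : ℝ) (hphat : phat = s / (1 + s)) :
    phat ∈ Set.Icc (0 : ℝ) 1 ∧ (∀ p ∈ Set.Icc (0 : ℝ) 1, L phat ≤ L p) ∧
      L phat = -2 * Real.log (Real.sqrt ((1 - q) * (1 - r)) + Real.sqrt (q * r)) := by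
  obtain ⟨hq0, hq1⟩ := hq
  obtain ⟨hr0, hr1⟩ := hr
  set a := Real.sqrt (q * r) with ha
  set b := Real.sqrt ((1 - q) * (1 - r)) with hb
  have ha0 : 0 < a := Real.sqrt_pos.2 (by nlinarith)
  have hb0 : 0 < b := Real.sqrt_pos.2 (by nlinarith)
  have hab : 0 < a + b := by linarith
  have hsab : s = a / b := by rw [hs, Real.sqrt_div (by nlinarith : (0:ℝ) ≤ q * r)]
  have hphat' : phat = a / (a + b) := by
    rw [hphat, hsab, show 1 + a / b = (a + b) / b by field_simp; ring,
      div_div_div_eq, mul_comm b (a+b), mul_div_mul_right _ _ hb0.ne']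
  have h1phat : 1 - phat = b / (a + b) := by
    rw [hphat']; field_simp; ring
  have hmem : phat ∈ Set.Icc (0 : ℝ) 1 := by
    constructor
    · rw [hphat']; positivity
    · rw [hphat']; rw [div_le_one hab]; linarith
  have hLa : ∀ p ∈ Set.Icc (0 : ℝ) 1,
      L p = 2 * (p * Real.log (p / a) + (1 - p) * Real.log ((1 - p) / b)) := by
    intro p hp
    have e1 := pair_log p q r hp.1 hq0 hr0
    have e2 := pair_log (1 - p) (1 - q) (1 - r) (by linarith [hp.2]) (by linarith) (by linarith)
    rw [hL]
    rw [← ha] at e1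
    rw [← hb] at e2
    linarith
  have hval : L phat = -2 * Real.log (a + b) := by
    have e1 : phat / a = (a + b)⁻¹ := by rw [hphat']; field_simp
    have e2 : (1 - phat) / b = (a + b)⁻¹ := by rw [h1phat]; field_simp
    rw [hLa phat hmem, e1, e2, Real.log_inv, h1phat, hphat']
    field_simp
    ring
  refine ⟨hmem, fun p hp => ?_, by rw [hval]; ring_nf⟩
  rw [hval, hLa p hp]
  have := gibbs p a b hp.1 hp.2 ha0 hb0
  linarith
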